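/- Let d be a positive divisor of N with gcd(d, N/d) = 1. For every s ∈ P_d ∩ S₀(n,N)^±, one has ψ_d¹(s) ≡ s₁₁ (mod d) and (ψ_d²(s))₁₁ ≡ s₁₁ (mod N/d), where s₁₁ is the (1,1) entry of s and (ψ_d²(s))₁₁ is the (1,1) entry of the (n−1)×(n−1) matrix ψ_d²(s). -/

import Mathlib

open Matrix

/-- `g_x` over `ℤ`: the identity matrix with its `(1,2)` entry replaced by `x`. -/
def gmatZ (n : ℕ) (x : ℤ) : Matrix (Fin (n + 2)) (Fin (n + 2)) ℤ :=
  1 + x • Matrix.single 0 1 1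

/-- Conjugation `g_d s g_d⁻¹` (note `g_d⁻¹ = g_{-d}`). -/
def conjd (n : ℕ) (d : ℤ) (s : Matrix (Fin (n + 2)) (Fin (n + 2)) ℤ) :
    Matrix (Fin (n + 2)) (Fin (n + 2)) ℤ :=
  gmatZ n d * s * gmatZ n (-d)

/-- `S₀(m+1,N)^±`: integer matrices with nonzero determinant relatively prime to `pN`
whose first row is `≡ (∗,0,…,0) (mod N)`. -/
def S0pm (p N : ℕ) {m : ℕ} : Set (Matrix (Fin (m + 1)) (Fin (m + 1)) ℤ) :=
  {s | s.det ≠ 0 ∧ Int.gcd s.det (p * N) = 1 ∧ ∀ j : Fin (m + 1), j ≠ 0 → (N : ℤ) ∣ s 0 j}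

/-- `ψ_d¹(s)`: the `(1,1)` entry of `g_d s g_d⁻¹`. -/
def psi1 (n : ℕ) (d : ℤ) (s : Matrix (Fin (n + 2)) (Fin (n + 2)) ℤ) : ℤ :=
  conjd n d s 0 0

/-- `ψ_d²(s)`: the lower-right `(n-1)×(n-1)` block of `g_d s g_d⁻¹`. -/
def psi2 (n : ℕ) (d : ℤ) (s : Matrix (Fin (n + 2)) (Fin (n + 2)) ℤ) :
    Matrix (Fin (n + 1)) (Fin (n + 1)) ℤ :=
  Matrix.of fun i j => conjd n d s i.succ j.succ

lemma conjd_expand (n : ℕ) (d : ℤ) (s : Matrix (Fin (n + 2)) (Fin (n + 2)) ℤ) :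
    conjd n d s = s + d • (Matrix.single 0 1 1 * s)
      + (-d) • (s * Matrix.single 0 1 1)
      + (d * (-d)) • (Matrix.single 0 1 1 * s * Matrix.single 0 1 1) := by
  simp only [conjd, gmatZ, Matrix.add_mul, Matrix.mul_add, Matrix.mul_one, Matrix.one_mul,
    Matrix.smul_mul, Matrix.mul_smul, smul_smul]
  module

lemma c00 (n : ℕ) (d : ℤ) (s : Matrix (Fin (n + 2)) (Fin (n + 2)) ℤ) :
    conjd n d s 0 0 = s 0 0 + d * s 1 0 := by
  have h1 : (0 : Fin (n + 2)) ≠ 1 := zero_ne_one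
  rw [conjd_expand]
  simp only [Matrix.add_apply, Matrix.smul_apply]
  simp [h1]

lemma c01 (n : ℕ) (d : ℤ) (s : Matrix (Fin (n + 2)) (Fin (n + 2)) ℤ) :
    conjd n d s 0 1 = s 0 1 + d * s 1 1 - d * (s 0 0 + d * s 1 0) := by
  rw [conjd_expand]
  simp only [Matrix.add_apply, Matrix.smul_apply]
  simp
  ring

lemma c11 (n : ℕ) (d : ℤ) (s : Matrix (Fin (n + 2)) (Fin (n + 2)) ℤ) :
    conjd n d s 1 1 = s 1 1 - d * s 1 0 := by
  have h1 : (1 : Fin (n + 2)) ≠ 0 := one_ne_zero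
  rw [conjd_expand]
  simp only [Matrix.add_apply, Matrix.smul_apply]
  simp [h1]
  ring

/-- for `s ∈ P_d ∩ S₀(n,N)^±` one has `ψ_d¹(s) ≡ s₁₁ (mod d)` and
`(ψ_d²(s))₁₁ ≡ s₁₁ (mod N/d)`. -/
theorem stmt1 (p : ℕ) (hp : p.Prime) (n N d : ℕ) (hN : 0 < N) (hd : 0 < d) (hdvd : d ∣ N)
    (hgcd : Nat.gcd d (N / d) = 1) (s : Matrix (Fin (n + 2)) (Fin (n + 2)) ℤ)
    (hs : s ∈ S0pm p N)
    (hsPd : ∀ j : Fin (n + 2), j ≠ 0 → conjd n (d : ℤ) s 0 j = 0) :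
    (d : ℤ) ∣ psi1 n (d : ℤ) s - s 0 0 ∧
    ((N / d : ℕ) : ℤ) ∣ psi2 n (d : ℤ) s 0 0 - s 0 0 := by
  constructor
  · rw [psi1, c00]
    exact ⟨s 1 0, by ring⟩
  · have h2 : psi2 n (d : ℤ) s 0 0 = conjd n (d : ℤ) s 1 1 := by
      simp [psi2, Fin.succ_zero_eq_one]
    rw [h2, c11]
    have h01 := hsPd 1 one_ne_zero
    rw [c01] at h01
    obtain ⟨k, hk⟩ := hs.2.2 1 one_ne_zero
    have hmul : (d : ℤ) * (s 1 1 - (d : ℤ) * s 1 0 - s 0 0) = (N : ℤ) * (-k) := by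
      have : s 0 1 = (N : ℤ) * k := hk
      linarith
    have hNd : (N : ℤ) = (d : ℤ) * ((N / d : ℕ) : ℤ) := by
      rw [← Nat.cast_mul, Nat.mul_div_cancel' hdvd]
    have hdne : (d : ℤ) ≠ 0 := by exact_mod_cast hd.ne'
    refine ⟨-k, mul_left_cancel₀ hdne ?_⟩
    rw [hmul, hNd]; ring
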